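/- arXiv:2510.25250 — 2 statements merged into one kernel-verified Lean document; each statement's English description precedes it below -/
import Mathlib

section
/- For every prime p ∈ {5, 7} and all integers n ≥ 0, a_3(pn + 4) ≡ 0 (mod 2). -/
open PowerSeries Finset

/-! ### Auxiliary: Franklin's involution on partitions into distinct parts -/


def caseA (S : Finset ℕ) (m s : ℕ) : Finset ℕ :=
  ((S \ Finset.Ioc (m - s) m).erase s) ∪ Finset.Ioc (m - s + 1) (m + 1)

def caseB (S : Finset ℕ) (m d : ℕ) : Finset ℕ :=
  insert (m - d) ((S \ Finset.Ioc d m) ∪ Finset.Ioc (d - 1) (m - 1))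

def fr' (S : Finset ℕ) (m s d : ℕ) : Finset ℕ :=
  if s ≤ m - d then
    (if m + 1 = 2*s ∧ d + 1 = s then S else caseA S m s)
  else
    (if d + 1 = s ∧ m = 2*d then S else caseB S m d)

def fr (S : Finset ℕ) : Finset ℕ :=
  if h : S.Nonempty then
    fr' S (S.max' h) (S.min' h)
      (((Finset.range (S.max' h + 1)).filter (fun x => x ∉ S)).sup id)
  else S

lemma fr_eq (S : Finset ℕ) (m s d : ℕ)
    (hm : m ∈ S) (hmU : ∀ x ∈ S, x ≤ m)
    (hs : s ∈ S) (hsL : ∀ x ∈ S, s ≤ x)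
    (hd : d ∉ S) (hdm : d ≤ m) (hstair : ∀ x, d < x → x ≤ m → x ∈ S) :
    fr S = fr' S m s d := by
  have hne : S.Nonempty := ⟨m, hm⟩
  rw [fr, dif_pos hne]
  have e1 : S.max' hne = m := le_antisymm (Finset.max'_le _ _ _ hmU) (Finset.le_max' _ _ hm)
  have e2 : S.min' hne = s := le_antisymm (Finset.min'_le _ _ hs) (Finset.le_min' _ _ _ hsL)
  rw [e1, e2]
  congr 1
  apply le_antisymm
  · apply Finset.sup_le
    intro y hy
    simp only [Finset.mem_filter, Finset.mem_range] at hy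
    by_contra hlt
    push_neg at hlt
    exact hy.2 (hstair y hlt (by omega))
  · exact Finset.le_sup (f := id) (by simp only [Finset.mem_filter, Finset.mem_range]; exact ⟨by omega, hd⟩)

lemma caseA_props (S : Finset ℕ) (m s d : ℕ)
    (hm : m ∈ S) (hmU : ∀ x ∈ S, x ≤ m)
    (hs : s ∈ S) (hsL : ∀ x ∈ S, s ≤ x)
    (hd : d ∉ S) (hdm : d ≤ m) (hstair : ∀ x, d < x → x ≤ m → x ∈ S)
    (h0 : (0:ℕ) ∉ S)
    (hc : s ≤ m - d) (hx : ¬(m + 1 = 2*s ∧ d + 1 = s)) :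
    (caseA S m s).sum id = S.sum id ∧ (∀ x ∈ caseA S m s, 1 ≤ x) ∧
      caseA S m s ≠ S ∧ fr (caseA S m s) = S := by
  have hs1 : 1 ≤ s := by
    rcases Nat.eq_zero_or_pos s with h | h
    · exact absurd (h ▸ hs) h0
    · exact h
  have hsm : s ≤ m := hsL m hm
  have hd1 : s ≤ d + 1 := by
    by_contra hlt
    push_neg at hlt
    have h1 : s - 1 ∈ S := hstair (s-1) (by omega) (by omega)
    have := hsL _ h1
    omega
  have hdm' : d ≠ m := fun h => hd (h ▸ hm)
  have h2s : 2*s ≤ m := by omega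
  have hsub : Finset.Ioc (m - s) m ⊆ S := by
    intro x hx'
    rw [Finset.mem_Ioc] at hx'
    exact hstair x (by omega) hx'.2
  have hmemT : ∀ x, x ∈ caseA S m s ↔
      ((x ∈ S ∧ ¬(m - s < x ∧ x ≤ m) ∧ x ≠ s) ∨ (m - s + 1 < x ∧ x ≤ m + 1)) := by
    intro x
    simp only [caseA, Finset.mem_union, Finset.mem_erase, Finset.mem_sdiff, Finset.mem_Ioc]
    tauto
  -- sum
  have hdisj : Disjoint ((S \ Finset.Ioc (m - s) m).erase s) (Finset.Ioc (m - s + 1) (m + 1)) := by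
    rw [Finset.disjoint_left]
    intro x hx1 hx2
    simp only [Finset.mem_erase, Finset.mem_sdiff, Finset.mem_Ioc] at hx1 hx2
    have := hmU x hx1.2.1
    omega
  have himg : Finset.Ioc (m - s + 1) (m + 1) = (Finset.Ioc (m - s) m).image (· + 1) := by
    ext x
    simp only [Finset.mem_Ioc, Finset.mem_image]
    constructor
    · intro h'; exact ⟨x - 1, by omega, by omega⟩
    · rintro ⟨y, hy, rfl⟩; omega
  have hsum2 : (Finset.Ioc (m - s + 1) (m + 1)).sum id = (Finset.Ioc (m - s) m).sum id + s := by
    rw [himg, Finset.sum_image (by intro a _ b _ h'; dsimp only at h'; omega)]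
    simp only [id_eq]
    rw [Finset.sum_add_distrib, Finset.sum_const, smul_eq_mul, Nat.card_Ioc]
    omega
  have hsplit : (S \ Finset.Ioc (m - s) m).sum id + (Finset.Ioc (m - s) m).sum id = S.sum id :=
    Finset.sum_sdiff hsub
  have hsmem : s ∈ S \ Finset.Ioc (m - s) m := by
    simp only [Finset.mem_sdiff, Finset.mem_Ioc]
    exact ⟨hs, by omega⟩
  have hserase : ((S \ Finset.Ioc (m - s) m).erase s).sum id + s
      = (S \ Finset.Ioc (m - s) m).sum id := Finset.sum_erase_add _ _ hsmem
  have hsumT : (caseA S m s).sum id = S.sum id := by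
    rw [caseA, Finset.sum_union hdisj, hsum2]
    simp only [Function.id_def] at hsum2 hsplit hserase ⊢
    omega
  -- positivity
  have hpos : ∀ x ∈ caseA S m s, 1 ≤ x := by
    intro x hx'
    rw [hmemT x] at hx'
    rcases hx' with ⟨hxS, -, -⟩ | h'
    · rcases Nat.eq_zero_or_pos x with rfl | h'
      · exact absurd hxS h0
      · exact h'
    · omega
  -- ne
  have hTmem : m + 1 ∈ caseA S m s := by rw [hmemT]; right; omega
  have hneS : caseA S m s ≠ S := by
    intro h
    rw [h] at hTmem
    have := hmU _ hTmem
    omega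
  refine ⟨hsumT, hpos, hneS, ?_⟩
  -- involution
  have hmTU : ∀ x ∈ caseA S m s, x ≤ m + 1 := by
    intro x hx'
    rw [hmemT x] at hx'
    rcases hx' with ⟨hxS, -, -⟩ | h'
    · exact le_trans (hmU x hxS) (by omega)
    · omega
  have hTne : (caseA S m s).Nonempty := ⟨m+1, hTmem⟩
  set sT := (caseA S m s).min' hTne with hsTdef
  have hsT : sT ∈ caseA S m s := Finset.min'_mem _ _
  have hsTL : ∀ x ∈ caseA S m s, sT ≤ x := fun x hx' => Finset.min'_le _ _ hx'
  have hsTs : s + 1 ≤ sT := by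
    have := hsT
    rw [hmemT] at this
    rcases this with ⟨hxS, -, hne''⟩ | h'
    · have := hsL _ hxS; omega
    · omega
  have hdT : (m - s + 1) ∉ caseA S m s := by
    rw [hmemT]
    rintro (⟨-, h2, -⟩ | h')
    · omega
    · omega
  have hstairT : ∀ x, m - s + 1 < x → x ≤ m + 1 → x ∈ caseA S m s := by
    intro x h1 h2
    rw [hmemT]
    right; omega
  have hfrT : fr (caseA S m s) = fr' (caseA S m s) (m+1) sT (m - s + 1) :=
    fr_eq _ _ _ _ hTmem hmTU hsT hsTL hdT (by omega) hstairT
  rw [hfrT, fr', if_neg (by omega), if_neg (by omega), caseB]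
  have e1 : (m+1) - (m-s+1) = s := by omega
  have e2 : (m-s+1) - 1 = m - s := by omega
  have e3 : (m+1) - 1 = m := by omega
  rw [e1, e2, e3]
  ext x
  simp only [Finset.mem_insert, Finset.mem_union, Finset.mem_sdiff, Finset.mem_Ioc, hmemT x]
  constructor
  · rintro (rfl | ⟨(⟨hxS, -, -⟩ | h'), hnot⟩ | h'')
    · exact hs
    · exact hxS
    · omega
    · exact hstair x (by omega) h''.2
  · intro hxS
    by_cases hxs : x = s
    · left; exact hxs
    by_cases hxr : m - s < x ∧ x ≤ m
    · right; right; omega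
    · right; left
      refine ⟨Or.inl ⟨hxS, hxr, hxs⟩, ?_⟩
      have := hmU x hxS
      omega

lemma caseB_props (S : Finset ℕ) (m s d : ℕ)
    (hm : m ∈ S) (hmU : ∀ x ∈ S, x ≤ m)
    (hs : s ∈ S) (hsL : ∀ x ∈ S, s ≤ x)
    (hd : d ∉ S) (hdm : d ≤ m) (hstair : ∀ x, d < x → x ≤ m → x ∈ S)
    (h0 : (0:ℕ) ∉ S)
    (hc : ¬(s ≤ m - d)) (hx : ¬(d + 1 = s ∧ m = 2*d)) :
    (caseB S m d).sum id = S.sum id ∧ (∀ x ∈ caseB S m d, 1 ≤ x) ∧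
      caseB S m d ≠ S ∧ fr (caseB S m d) = S := by
  have hs1 : 1 ≤ s := by
    rcases Nat.eq_zero_or_pos s with h | h
    · exact absurd (h ▸ hs) h0
    · exact h
  have hsm : s ≤ m := hsL m hm
  have hd1 : s ≤ d + 1 := by
    by_contra hlt
    push_neg at hlt
    have h1 : s - 1 ∈ S := hstair (s-1) (by omega) (by omega)
    have := hsL _ h1
    omega
  have hdm' : d ≠ m := fun h => hd (h ▸ hm)
  have h2d : m < 2*d := by omega
  have hd0 : 1 ≤ d := by omega
  have hsubB : Finset.Ioc d m ⊆ S := by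
    intro x hx'
    rw [Finset.mem_Ioc] at hx'
    exact hstair x hx'.1 hx'.2
  have hmemT : ∀ x, x ∈ caseB S m d ↔
      (x = m - d ∨ (x ∈ S ∧ ¬(d < x ∧ x ≤ m)) ∨ (d - 1 < x ∧ x ≤ m - 1)) := by
    intro x
    simp only [caseB, Finset.mem_insert, Finset.mem_union, Finset.mem_sdiff, Finset.mem_Ioc]
  -- sum
  have hnotmem : (m - d) ∉ (S \ Finset.Ioc d m) ∪ Finset.Ioc (d - 1) (m - 1) := by
    rintro h'
    rw [Finset.mem_union, Finset.mem_sdiff, Finset.mem_Ioc, Finset.mem_Ioc] at h'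
    rcases h' with ⟨hxS, -⟩ | h'
    · have := hsL _ hxS; omega
    · omega
  have hdisj : Disjoint (S \ Finset.Ioc d m) (Finset.Ioc (d - 1) (m - 1)) := by
    rw [Finset.disjoint_left]
    intro x hx1 hx2
    rw [Finset.mem_sdiff, Finset.mem_Ioc] at hx1
    rw [Finset.mem_Ioc] at hx2
    have h1 := hmU x hx1.1
    have h2 : x ≠ d := fun e => hd (e ▸ hx1.1)
    omega
  have himgB : Finset.Ioc d m = (Finset.Ioc (d - 1) (m - 1)).image (· + 1) := by
    ext x
    simp only [Finset.mem_Ioc, Finset.mem_image]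
    constructor
    · intro h'; exact ⟨x - 1, by omega, by omega⟩
    · rintro ⟨y, hy, rfl⟩; omega
  have hsum2 : (Finset.Ioc d m).sum id = (Finset.Ioc (d - 1) (m - 1)).sum id + (m - d) := by
    rw [himgB, Finset.sum_image (by intro a _ b _ h'; dsimp only at h'; omega)]
    simp only [Function.id_def]
    rw [Finset.sum_add_distrib, Finset.sum_const, smul_eq_mul, Nat.card_Ioc]
    omega
  have hsplit : (S \ Finset.Ioc d m).sum id + (Finset.Ioc d m).sum id = S.sum id :=
    Finset.sum_sdiff hsubB
  have hsumT : (caseB S m d).sum id = S.sum id := by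
    rw [caseB, Finset.sum_insert hnotmem, Finset.sum_union hdisj]
    simp only [Function.id_def] at hsum2 hsplit ⊢
    omega
  -- positivity
  have hpos : ∀ x ∈ caseB S m d, 1 ≤ x := by
    intro x hx'
    rw [hmemT x] at hx'
    rcases hx' with rfl | ⟨hxS, -⟩ | h'
    · omega
    · rcases Nat.eq_zero_or_pos x with rfl | h'
      · exact absurd hxS h0
      · exact h'
    · omega
  -- ne
  have hmnotT : m ∉ caseB S m d := by
    rw [hmemT]
    rintro (h' | ⟨-, h'⟩ | h') <;> omega
  have hneS : caseB S m d ≠ S := by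
    intro h
    rw [h] at hmnotT
    exact hmnotT hm
  refine ⟨hsumT, hpos, hneS, ?_⟩
  -- involution
  have hmTmem : m - 1 ∈ caseB S m d := by rw [hmemT]; right; right; omega
  have hmTU : ∀ x ∈ caseB S m d, x ≤ m - 1 := by
    intro x hx'
    rw [hmemT x] at hx'
    rcases hx' with rfl | ⟨hxS, hr⟩ | h'
    · omega
    · have h1 := hmU x hxS
      have h2 : x ≠ d := fun e => hd (e ▸ hxS)
      omega
    · omega
  have hsTmem : m - d ∈ caseB S m d := by rw [hmemT]; left; rfl
  have hsTL : ∀ x ∈ caseB S m d, m - d ≤ x := by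
    intro x hx'
    rw [hmemT x] at hx'
    rcases hx' with rfl | ⟨hxS, -⟩ | h'
    · omega
    · have := hsL _ hxS; omega
    · omega
  have h0T : (0:ℕ) ∉ caseB S m d := by
    intro h'
    have := hpos 0 h'
    omega
  set dT := ((Finset.range ((m-1) + 1)).filter (fun x => x ∉ caseB S m d)).max'
    ⟨0, by simp only [Finset.mem_filter, Finset.mem_range]; exact ⟨by omega, h0T⟩⟩ with hdTdef
  have hdTfil : dT ∈ (Finset.range ((m-1) + 1)).filter (fun x => x ∉ caseB S m d) :=
    Finset.max'_mem _ _
  rw [Finset.mem_filter, Finset.mem_range] at hdTfil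
  have hdTnot : dT ∉ caseB S m d := hdTfil.2
  have hdTle : dT ≤ m - 1 := by omega
  have hstairT : ∀ x, dT < x → x ≤ m - 1 → x ∈ caseB S m d := by
    intro x h1 h2
    by_contra h3
    have : x ≤ dT := Finset.le_max' _ _ (by
      simp only [Finset.mem_filter, Finset.mem_range]
      exact ⟨by omega, h3⟩)
    omega
  have hdTd : dT ≤ d - 1 := by
    by_contra h'
    push_neg at h'
    exact hdTnot (by rw [hmemT]; right; right; omega)
  have hfrT : fr (caseB S m d) = fr' (caseB S m d) (m-1) (m-d) dT :=
    fr_eq _ _ _ _ hmTmem hmTU hsTmem hsTL hdTnot hdTle hstairT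
  rw [hfrT, fr', if_pos (by omega), if_neg (by omega), caseA]
  have e1 : (m-1) - (m-d) = d - 1 := by omega
  have e2 : d - 1 + 1 = d := by omega
  have e3 : (m-1) + 1 = m := by omega
  rw [e1, e2, e3]
  ext x
  simp only [Finset.mem_union, Finset.mem_erase, Finset.mem_sdiff, Finset.mem_Ioc, hmemT x]
  constructor
  · rintro (⟨hne', (rfl | ⟨hxS, -⟩ | h'), hnot⟩ | h'')
    · exact absurd rfl hne'
    · exact hxS
    · omega
    · exact hstair x h''.1 h''.2
  · intro hxS
    by_cases hxr : d < x ∧ x ≤ m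
    · right; omega
    · left
      have h1 := hsL x hxS
      refine ⟨by omega, Or.inr (Or.inl ⟨hxS, hxr⟩), ?_⟩
      have h2 := hmU x hxS
      have h3 : x ≠ d := fun e => hd (e ▸ hxS)
      omega

lemma sum_Ioc_id (a b : ℕ) (h : a ≤ b) :
    2 * (∑ x ∈ Finset.Ioc a b, x) + a*(a+1) = b*(b+1) := by
  induction b, h using Nat.le_induction with
  | base => simp
  | succ b hab ih =>
    rw [Finset.sum_Ioc_succ_top (by omega)]
    ring_nf
    ring_nf at ih
    omega

lemma pent1 (d N : ℕ) (h : 2*N + d*(d+1) = (2*d+1)*(2*d+1+1)) : ¬(N % 5 = 4 ∨ N % 7 = 4) := by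
  rintro (h5 | h7)
  · have h' : ((2*N + d*(d+1) : ℕ) : ZMod 5) = (((2*d+1)*(2*d+1+1) : ℕ) : ZMod 5) := by rw [h]
    push_cast at h'
    have hN : ((N : ℕ) : ZMod 5) = 4 := by rw [← ZMod.natCast_mod, h5]; rfl
    rw [hN] at h'
    revert h'
    generalize ((d : ZMod 5)) = x
    revert x; decide
  · have h' : ((2*N + d*(d+1) : ℕ) : ZMod 7) = (((2*d+1)*(2*d+1+1) : ℕ) : ZMod 7) := by rw [h]
    push_cast at h'
    have hN : ((N : ℕ) : ZMod 7) = 4 := by rw [← ZMod.natCast_mod, h7]; rfl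
    rw [hN] at h'
    revert h'
    generalize ((d : ZMod 7)) = x
    revert x; decide

lemma pent2 (d N : ℕ) (h : 2*N + d*(d+1) = 2*d*(2*d+1)) : ¬(N % 5 = 4 ∨ N % 7 = 4) := by
  rintro (h5 | h7)
  · have h' : ((2*N + d*(d+1) : ℕ) : ZMod 5) = ((2*d*(2*d+1) : ℕ) : ZMod 5) := by rw [h]
    push_cast at h'
    have hN : ((N : ℕ) : ZMod 5) = 4 := by rw [← ZMod.natCast_mod, h5]; rfl
    rw [hN] at h'
    revert h'
    generalize ((d : ZMod 5)) = x
    revert x; decide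
  · have h' : ((2*N + d*(d+1) : ℕ) : ZMod 7) = ((2*d*(2*d+1) : ℕ) : ZMod 7) := by rw [h]
    push_cast at h'
    have hN : ((N : ℕ) : ZMod 7) = 4 := by rw [← ZMod.natCast_mod, h7]; rfl
    rw [hN] at h'
    revert h'
    generalize ((d : ZMod 7)) = x
    revert x; decide

lemma fr_main (S : Finset ℕ) (N : ℕ) (h1 : ∀ x ∈ S, 1 ≤ x)
    (hsum : S.sum id = N) (hN4 : 4 ≤ N) (hmod : N % 5 = 4 ∨ N % 7 = 4) :
    (fr S).sum id = N ∧ (∀ x ∈ fr S, 1 ≤ x) ∧ fr S ≠ S ∧ fr (fr S) = S := by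
  have h0 : (0:ℕ) ∉ S := fun h => by have := h1 0 h; omega
  have hne : S.Nonempty := by
    rcases S.eq_empty_or_nonempty with rfl | h
    · rw [Finset.sum_empty] at hsum; omega
    · exact h
  set m := S.max' hne with hmdef
  set s := S.min' hne with hsdef
  have hm : m ∈ S := Finset.max'_mem _ _
  have hmU : ∀ x ∈ S, x ≤ m := fun x hx => Finset.le_max' S x hx
  have hs : s ∈ S := Finset.min'_mem _ _
  have hsL : ∀ x ∈ S, s ≤ x := fun x hx => Finset.min'_le S x hx
  set d := ((Finset.range (m + 1)).filter (fun x => x ∉ S)).max'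
    ⟨0, by simp only [Finset.mem_filter, Finset.mem_range]; exact ⟨by omega, h0⟩⟩ with hddef
  have hdfil : d ∈ (Finset.range (m + 1)).filter (fun x => x ∉ S) := Finset.max'_mem _ _
  rw [Finset.mem_filter, Finset.mem_range] at hdfil
  have hd : d ∉ S := hdfil.2
  have hdm : d ≤ m := by omega
  have hstair : ∀ x, d < x → x ≤ m → x ∈ S := by
    intro x hx1 hx2
    by_contra h3
    have : x ≤ d := Finset.le_max' _ _ (by
      simp only [Finset.mem_filter, Finset.mem_range]
      exact ⟨by omega, h3⟩)
    omega
  have heq : fr S = fr' S m s d := fr_eq S m s d hm hmU hs hsL hd hdm hstair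
  rw [fr'] at heq
  have hss : (∑ x ∈ S, x) = N := by simpa only [Function.id_def] using hsum
  by_cases hc : s ≤ m - d
  · rw [if_pos hc] at heq
    by_cases hex : m + 1 = 2*s ∧ d + 1 = s
    · exfalso
      have hSeq : S = Finset.Ioc d m := by
        apply Finset.Subset.antisymm
        · intro x hx
          rw [Finset.mem_Ioc]
          have := hsL x hx
          have := hmU x hx
          omega
        · intro x hx
          rw [Finset.mem_Ioc] at hx
          exact hstair x hx.1 hx.2
      have hd2 : m = 2*d + 1 := by omega
      have hsI := sum_Ioc_id d m (by omega)
      rw [← hSeq, hss, hd2] at hsI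
      exact pent1 d N (by omega) hmod
    · rw [if_neg hex] at heq
      obtain ⟨c1, c2, c3, c4⟩ := caseA_props S m s d hm hmU hs hsL hd hdm hstair h0 hc hex
      rw [heq]
      exact ⟨by rw [c1, hsum], c2, c3, c4⟩
  · rw [if_neg hc] at heq
    by_cases hex : d + 1 = s ∧ m = 2*d
    · exfalso
      have hSeq : S = Finset.Ioc d m := by
        apply Finset.Subset.antisymm
        · intro x hx
          rw [Finset.mem_Ioc]
          have := hsL x hx
          have := hmU x hx
          omega
        · intro x hx
          rw [Finset.mem_Ioc] at hx
          exact hstair x hx.1 hx.2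
      have hd2 : m = 2*d := hex.2
      have hsI := sum_Ioc_id d m (by omega)
      rw [← hSeq, hss, hd2] at hsI
      exact pent2 d N (by omega) hmod
    · rw [if_neg hex] at heq
      obtain ⟨c1, c2, c3, c4⟩ := caseB_props S m s d hm hmU hs hsL hd hdm hstair h0 hc hex
      rw [heq]
      exact ⟨by rw [c1, hsum], c2, c3, c4⟩

/-! ### Power series reduction mod 2 -/

abbrev R2 := ZMod 2

lemma two_eq_zero' : (2 : (R2)⟦X⟧) = 0 := by
  have h : (PowerSeries.C (R := R2)) 2 = (2 : (R2)⟦X⟧) := map_ofNat _ 2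
  rw [← h, show (2:R2) = 0 from rfl, map_zero]

lemma D_ne_zero (M : ℕ) : (∏ i ∈ range (M+1), ((1 : (R2)⟦X⟧) + X^(i+1))) ≠ 0 := by
  intro h
  have h2 : constantCoeff (R := R2) (∏ i ∈ range (M+1), ((1 : (R2)⟦X⟧) + X^(i+1))) = 1 := by
    rw [map_prod]
    simp
  rw [h] at h2
  simp at h2

lemma map_a_eq (N : ℕ) :
    PowerSeries.map (Int.castRingHom R2)
      ((∏ i ∈ Finset.range (N + 1),
        ((1 : PowerSeries ℤ) - (PowerSeries.X : PowerSeries ℤ) ^ (2 * (i + 1))) ^ 2) *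
      ∏ i ∈ Finset.range (N + 1),
        (Ring.inverse ((1 : PowerSeries ℤ) - (PowerSeries.X : PowerSeries ℤ) ^ (i + 1))) ^ 3)
    = ∏ i ∈ range (N+1), ((1 : (R2)⟦X⟧) + X^(i+1)) := by
  set D := ∏ i ∈ range (N+1), ((1 : (R2)⟦X⟧) + X^(i+1)) with hD
  have hcancel : ∀ i : ℕ, Ring.inverse ((1 : PowerSeries ℤ) - X ^ (i+1)) * ((1 : PowerSeries ℤ) - X ^ (i+1)) = 1 := by
    intro i
    apply Ring.inverse_mul_cancel
    rw [PowerSeries.isUnit_iff_constantCoeff]; simp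
  apply mul_right_cancel₀ (pow_ne_zero 3 (D_ne_zero N))
  have key : (PowerSeries.map (Int.castRingHom R2)
      ((∏ i ∈ Finset.range (N + 1), ((1 : PowerSeries ℤ) - X ^ (2 * (i + 1))) ^ 2) *
      ∏ i ∈ Finset.range (N + 1), (Ring.inverse ((1 : PowerSeries ℤ) - X ^ (i + 1))) ^ 3)) *
      PowerSeries.map (Int.castRingHom R2) (∏ i ∈ Finset.range (N+1), ((1 : PowerSeries ℤ) - X ^ (i+1)) ^ 3)
      = PowerSeries.map (Int.castRingHom R2) (∏ i ∈ Finset.range (N + 1), ((1 : PowerSeries ℤ) - X ^ (2 * (i + 1))) ^ 2) := by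
    rw [← map_mul]
    congr 1
    rw [mul_assoc, ← Finset.prod_mul_distrib]
    have : ∀ i ∈ Finset.range (N+1), (Ring.inverse ((1 : PowerSeries ℤ) - X ^ (i+1)))^3 * ((1 : PowerSeries ℤ) - X ^ (i+1))^3 = 1 := by
      intro i _
      rw [← mul_pow, hcancel i, one_pow]
    rw [Finset.prod_congr rfl this, Finset.prod_const_one, mul_one]
  have hmap3 : PowerSeries.map (Int.castRingHom R2) (∏ i ∈ Finset.range (N+1), ((1 : PowerSeries ℤ) - X ^ (i+1)) ^ 3) = D ^ 3 := by
    rw [map_prod, hD, ← Finset.prod_pow]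
    apply Finset.prod_congr rfl
    intro i _
    rw [map_pow, map_sub, map_one, map_pow, PowerSeries.map_X]
    congr 1
    linear_combination (- (X:(R2)⟦X⟧)^(i+1)) * two_eq_zero'
  have hmap2 : PowerSeries.map (Int.castRingHom R2) (∏ i ∈ Finset.range (N + 1), ((1 : PowerSeries ℤ) - X ^ (2 * (i + 1))) ^ 2) = D ^ 4 := by
    rw [map_prod, hD, ← Finset.prod_pow]
    apply Finset.prod_congr rfl
    intro i _
    rw [map_pow, map_sub, map_one, map_pow, PowerSeries.map_X]
    have : ((1 : (R2)⟦X⟧) - (X:(R2)⟦X⟧) ^ (2*(i+1))) = ((1 : (R2)⟦X⟧) + X^(i+1))^2 := by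
      linear_combination (-(X:(R2)⟦X⟧)^(i+1) - (X:(R2)⟦X⟧)^(2*(i+1))) * two_eq_zero'
    rw [this, ← pow_mul]
  rw [hmap3] at key
  rw [key, hmap2]
  ring

lemma coeff_D (N : ℕ) : (PowerSeries.coeff (R := R2) N) (∏ i ∈ range (N+1), ((1:(R2)⟦X⟧) + X^(i+1)))
    = ∑ t ∈ (Finset.Icc 1 (N+1)).powerset, if N = t.sum id then 1 else 0 := by
  have h1 : Finset.Icc 1 (N+1) = (range (N+1)).image (·+1) := by
    ext x
    simp only [Finset.mem_Icc, Finset.mem_image, Finset.mem_range]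
    constructor
    · rintro ⟨ha, hb⟩; exact ⟨x-1, by omega, by omega⟩
    · rintro ⟨a, ha, rfl⟩; omega
  have h2 : ∏ i ∈ range (N+1), ((1:(R2)⟦X⟧) + X^(i+1)) = ∏ j ∈ Finset.Icc 1 (N+1), ((X:(R2)⟦X⟧)^j + 1) := by
    rw [h1, Finset.prod_image (by intro a _ b _ h; dsimp only at h; omega)]
    exact Finset.prod_congr rfl (fun i _ => add_comm _ _)
  rw [h2, Finset.prod_add]
  rw [map_sum]
  apply Finset.sum_congr rfl
  intro t _
  rw [Finset.prod_const_one, mul_one, Finset.prod_pow_eq_pow_sum]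
  simpa using PowerSeries.coeff_X_pow N (∑ i ∈ t, i)

/-! ### The involution kills the coefficient -/

lemma sum_zero (N : ℕ) (hN4 : 4 ≤ N) (hmod : N % 5 = 4 ∨ N % 7 = 4) :
    (∑ t ∈ (Finset.Icc 1 (N+1)).powerset, if N = t.sum id then (1 : R2) else 0) = 0 := by
  apply Finset.sum_involution (fun t _ => if N = t.sum id then fr t else t)
  · intro t ht
    by_cases hc : N = t.sum id
    · have h1 : ∀ x ∈ t, 1 ≤ x := by
        intro x hx
        have := Finset.mem_powerset.mp ht hx
        rw [Finset.mem_Icc] at this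
        omega
      obtain ⟨c1, -, -, -⟩ := fr_main t N h1 hc.symm hN4 hmod
      rw [if_pos hc, if_pos hc, if_pos c1.symm]
      decide
    · rw [if_neg hc, if_neg hc, if_neg hc]
      decide
  · intro t ht hf
    have hc : N = t.sum id := by
      by_contra h'
      rw [if_neg h'] at hf
      exact hf rfl
    have h1 : ∀ x ∈ t, 1 ≤ x := by
      intro x hx
      have := Finset.mem_powerset.mp ht hx
      rw [Finset.mem_Icc] at this
      omega
    obtain ⟨-, -, c3, -⟩ := fr_main t N h1 hc.symm hN4 hmod
    rw [if_pos hc]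
    exact c3
  · intro t ht
    by_cases hc : N = t.sum id
    · rw [if_pos hc]
      have h1 : ∀ x ∈ t, 1 ≤ x := by
        intro x hx
        have := Finset.mem_powerset.mp ht hx
        rw [Finset.mem_Icc] at this
        omega
      obtain ⟨c1, c2, -, -⟩ := fr_main t N h1 hc.symm hN4 hmod
      rw [Finset.mem_powerset]
      intro x hx
      rw [Finset.mem_Icc]
      refine ⟨c2 x hx, ?_⟩
      have : id x ≤ (fr t).sum id := Finset.single_le_sum (fun i _ => Nat.zero_le (id i)) hx
      rw [c1] at this
      simpa using le_trans this (by omega)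
    · rwa [if_neg hc]
  · intro t ht
    by_cases hc : N = t.sum id
    · have h1 : ∀ x ∈ t, 1 ≤ x := by
        intro x hx
        have := Finset.mem_powerset.mp ht hx
        rw [Finset.mem_Icc] at this
        omega
      obtain ⟨c1, -, -, c4⟩ := fr_main t N h1 hc.symm hN4 hmod
      simp only [if_pos hc, if_pos c1.symm]
      exact c4
    · simp only [if_neg hc]

/-! ### Main statement -/

/-- `a k n` is the number of partitions of `n` in which even parts appear in a single
color while odd parts may appear in any one of `k` colors; equivalently, it is the
coefficient of `q^n` in `∏_{i ≥ 1} (1 - q^{2i})^{k-1} / ∏_{i ≥ 1} (1 - q^i)^k` over `ℤ`.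
Each factor `(1 - q^i)` has constant term `1`, hence is a unit in `ℤ⟦q⟧`, and its
inverse is given by `Ring.inverse`.  Since every factor with index `i > n` is of the
form `1 + O(q^{n+1})` and so does not affect the coefficient of `q^n`, the infinite
products may be truncated at `i = n + 1`. -/
noncomputable def a (k n : ℕ) : ℤ :=
  PowerSeries.coeff (R := ℤ) n
    ((∏ i ∈ Finset.range (n + 1),
        ((1 : PowerSeries ℤ) - (PowerSeries.X : PowerSeries ℤ) ^ (2 * (i + 1))) ^ (k - 1)) *
      ∏ i ∈ Finset.range (n + 1),
        (Ring.inverse ((1 : PowerSeries ℤ) - (PowerSeries.X : PowerSeries ℤ) ^ (i + 1))) ^ k)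

theorem a_three_cong_mod_two_shift_four (p : ℕ)
    (hp : p ∈ ({5, 7} : Finset ℕ)) (n : ℕ) :
    (2 : ℤ) ∣ a 3 (p * n + 4) := by
  set N := p * n + 4 with hNdef
  have hp' : p = 5 ∨ p = 7 := by
    simp only [Finset.mem_insert, Finset.mem_singleton] at hp
    exact hp
  have hmod : N % 5 = 4 ∨ N % 7 = 4 := by
    rcases hp' with rfl | rfl
    · left; omega
    · right; omega
  have hN4 : 4 ≤ N := by omega
  have hcast : ((a 3 N : ℤ) : R2) = 0 := by
    have : ((a 3 N : ℤ) : R2)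
        = (PowerSeries.coeff (R := R2) N) (PowerSeries.map (Int.castRingHom R2)
          ((∏ i ∈ Finset.range (N + 1),
              ((1 : PowerSeries ℤ) - (PowerSeries.X : PowerSeries ℤ) ^ (2 * (i + 1))) ^ 2) *
            ∏ i ∈ Finset.range (N + 1),
              (Ring.inverse ((1 : PowerSeries ℤ) - (PowerSeries.X : PowerSeries ℤ) ^ (i + 1))) ^ 3)) := by
      rw [PowerSeries.coeff_map]
      rfl
    rw [this, map_a_eq, coeff_D]
    exact sum_zero N hN4 hmod
  have := (ZMod.intCast_zmod_eq_zero_iff_dvd (a 3 N) 2).mp hcast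
  exact_mod_cast this
end

section
/- For all integers n ≥ 0, a_5(6n + 5) ≡ 0 (mod 2). -/
open PowerSeries Finset

noncomputable section AuxJTP

abbrev S2 : Type := PowerSeries (ZMod 2)

lemma S2.add_self (x : S2) : x + x = 0 := by
  have h : (1 : S2) + 1 = 0 := by
    have : ((1 : ZMod 2) + 1) = 0 := by decide
    rw [← map_one (PowerSeries.C (R := ZMod 2)), ← map_add, this, map_zero]
  calc x + x = (1 + 1) * x := by ring
    _ = 0 := by rw [h, zero_mul]

lemma S2.two_eq_zero' : (2 : S2) = 0 := by
  have h : (1 : S2) + 1 = 0 := by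
    have : ((1 : ZMod 2) + 1) = 0 := by decide
    rw [← map_one (PowerSeries.C (R := ZMod 2)), ← map_add, this, map_zero]
  calc (2 : S2) = 1 + 1 := by norm_num
    _ = 0 := h

lemma S2.sq_one_add (x : S2) : (1 + x) ^ 2 = 1 + x ^ 2 := by
  have : (1 + x) ^ 2 = 1 + x ^ 2 + (x + x) := by ring
  rw [this, S2.add_self, add_zero]

/-- Gaussian binomial in base `Q`. -/
def gb (Q : S2) : ℕ → ℕ → S2
  | 0, m => if m = 0 then 1 else 0
  | (n+1), m => if m = 0 then 1 else gb Q n m + Q ^ (n + 1 - m) * gb Q n (m - 1)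

variable {Q : S2}

@[simp] lemma gb_zero_right (n : ℕ) : gb Q n 0 = 1 := by cases n <;> simp [gb]

@[simp] lemma gb_zero_zero : gb Q 0 0 = 1 := by simp [gb]

lemma gb_succ (n m : ℕ) : gb Q (n+1) (m+1) = gb Q n (m+1) + Q ^ (n - m) * gb Q n m := by
  simp [gb]

lemma gb_eq_zero_of_lt : ∀ {n m : ℕ}, n < m → gb Q n m = 0
  | 0, m, h => by simp [gb]; omega
  | (n+1), m, h => by
      obtain ⟨m, rfl⟩ : ∃ k, m = k + 1 := ⟨m - 1, by omega⟩
      rw [gb_succ, gb_eq_zero_of_lt (by omega), gb_eq_zero_of_lt (by omega)]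
      ring

@[simp] lemma gb_self : ∀ n : ℕ, gb Q n n = 1
  | 0 => by simp
  | (n+1) => by rw [gb_succ, gb_eq_zero_of_lt (by omega), gb_self n, Nat.sub_self, pow_zero]; ring

/-- ratio identity, in char 2. -/
lemma gb_ratio : ∀ n m : ℕ, (1 + Q ^ (m+1)) * gb Q n (m+1) = (1 + Q ^ (n - m)) * gb Q n m
  | 0, m => by
      rw [gb_eq_zero_of_lt (by omega)]
      simp only [Nat.zero_sub, pow_zero, mul_zero]
      rcases Nat.eq_zero_or_pos m with h | h
      · subst h; rw [gb_zero_right, mul_one]; exact (S2.add_self 1).symm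
      · rw [gb_eq_zero_of_lt h, mul_zero]
  | (n+1), 0 => by
      have hgb : gb Q (n+1) 1 = gb Q n 1 + Q ^ n := by
        have := gb_succ (Q := Q) n 0
        rwa [Nat.sub_zero, gb_zero_right, mul_one] at this
      have ih := gb_ratio n 0
      rw [gb_zero_right, mul_one, Nat.sub_zero] at ih
      rw [hgb, gb_zero_right, mul_one, Nat.sub_zero]
      have expand : (1 + Q ^ (0+1)) * (gb Q n 1 + Q ^ n)
          = (1 + Q ^ (0+1)) * gb Q n 1 + Q ^ n + Q ^ (n+1) := by ring
      rw [expand, ih]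
      have : 1 + Q ^ n + Q ^ n + Q ^ (n+1) = 1 + Q ^ (n+1) + (Q ^ n + Q ^ n) := by ring
      rw [this, S2.add_self, add_zero]
  | (n+1), (m+1) => by
      rcases Nat.lt_or_ge n (m+1) with h | h
      · rcases Nat.eq_or_lt_of_le h with h' | h'
        · -- n = m
          have hn : n = m := by omega
          subst hn
          rw [gb_eq_zero_of_lt (by omega), mul_zero, gb_self,
            Nat.sub_self, pow_zero, mul_one, S2.add_self]
        · rw [gb_eq_zero_of_lt (by omega), gb_eq_zero_of_lt (by omega), mul_zero, mul_zero]
      · obtain ⟨d, rfl⟩ : ∃ d, n = m + 1 + d := ⟨n - (m+1), by omega⟩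
        have ih1 := gb_ratio (m+1+d) (m+1)
        have ih0 := gb_ratio (m+1+d) m
        have ed1 : m + 1 + d - (m+1) = d := by omega
        have ed0 : m + 1 + d - m = d + 1 := by omega
        rw [ed1] at ih1
        rw [ed0] at ih0
        have hs2 : gb Q (m+1+d+1) (m+2) = gb Q (m+1+d) (m+2) + Q ^ d * gb Q (m+1+d) (m+1) := by
          have := gb_succ (Q := Q) (m+1+d) (m+1)
          rwa [ed1] at this
        have hs1 : gb Q (m+1+d+1) (m+1) = gb Q (m+1+d) (m+1) + Q ^ (d+1) * gb Q (m+1+d) m := by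
          have := gb_succ (Q := Q) (m+1+d) m
          rwa [ed0] at this
        have eL : m + 1 + d + 1 - (m + 1) = d + 1 := by omega
        rw [eL, hs2, hs1]
        -- LHS
        have L : (1 + Q ^ (m+1+1)) * (gb Q (m+1+d) (m+2) + Q ^ d * gb Q (m+1+d) (m+1))
            = gb Q (m+1+d) (m+1) * (1 + Q ^ (m+1+d+1))
              + (Q ^ d * gb Q (m+1+d) (m+1) + Q ^ d * gb Q (m+1+d) (m+1)) := by
          have : (1 + Q ^ (m+1+1)) * (gb Q (m+1+d) (m+2) + Q ^ d * gb Q (m+1+d) (m+1))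
              = (1 + Q ^ (m+1+1)) * gb Q (m+1+d) (m+2)
                + Q ^ d * ((1 + Q ^ (m+1+1)) * gb Q (m+1+d) (m+1)) := by ring
          rw [this, ih1]
          have hpow : Q ^ d * Q ^ (m+1+1) = Q ^ (m+1+d+1) := by
            rw [← pow_add]; ring_nf
          calc (1 + Q ^ d) * gb Q (m+1+d) (m+1)
                + Q ^ d * ((1 + Q ^ (m+1+1)) * gb Q (m+1+d) (m+1))
              = gb Q (m+1+d) (m+1) * (1 + Q ^ d * Q ^ (m+1+1))
                + (Q ^ d * gb Q (m+1+d) (m+1) + Q ^ d * gb Q (m+1+d) (m+1)) := by ring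
            _ = _ := by rw [hpow]
        have R : (1 + Q ^ (d+1)) * (gb Q (m+1+d) (m+1) + Q ^ (d+1) * gb Q (m+1+d) m)
            = gb Q (m+1+d) (m+1) * (1 + Q ^ (m+1+d+1))
              + (Q ^ (d+1) * gb Q (m+1+d) (m+1) + Q ^ (d+1) * gb Q (m+1+d) (m+1)) := by
          have : (1 + Q ^ (d+1)) * (gb Q (m+1+d) (m+1) + Q ^ (d+1) * gb Q (m+1+d) m)
              = (1 + Q ^ (d+1)) * gb Q (m+1+d) (m+1)
                + Q ^ (d+1) * ((1 + Q ^ (d+1)) * gb Q (m+1+d) m) := by ring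
          rw [this, ← ih0]
          have hpow : Q ^ (d+1) * Q ^ (m+1) = Q ^ (m+1+d+1) := by
            rw [← pow_add]; ring_nf
          calc (1 + Q ^ (d+1)) * gb Q (m+1+d) (m+1)
                + Q ^ (d+1) * ((1 + Q ^ (m+1)) * gb Q (m+1+d) (m+1))
              = gb Q (m+1+d) (m+1) * (1 + Q ^ (d+1) * Q ^ (m+1))
                + (Q ^ (d+1) * gb Q (m+1+d) (m+1) + Q ^ (d+1) * gb Q (m+1+d) (m+1)) := by ring
            _ = _ := by rw [hpow]
        rw [L, R, S2.add_self, S2.add_self]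
  termination_by n m => n

/-- second Pascal identity (char 2). -/
lemma gb_pascal2 (n m : ℕ) :
    gb Q (n+1) (m+1) = Q ^ (m+1) * gb Q n (m+1) + gb Q n m := by
  rcases Nat.lt_or_ge n m with h | h
  · rw [gb_eq_zero_of_lt (by omega), gb_eq_zero_of_lt (by omega), gb_eq_zero_of_lt (by omega)]
    ring
  · obtain ⟨d, rfl⟩ : ∃ d, n = m + d := ⟨n - m, by omega⟩
    have hr := gb_ratio (Q := Q) (m+d) m
    have ed : m + d - m = d := by omega
    rw [ed] at hr
    have hs : gb Q (m+d+1) (m+1) = gb Q (m+d) (m+1) + Q ^ d * gb Q (m+d) m := by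
      have := gb_succ (Q := Q) (m+d) m
      rwa [ed] at this
    rw [hs]
    have key : gb Q (m+d) (m+1) + Q ^ (m+1) * gb Q (m+d) (m+1)
        = gb Q (m+d) m + Q ^ d * gb Q (m+d) m := by
      linear_combination hr
    linear_combination key + (Q ^ d * gb Q (m+d) m - Q ^ (m+1) * gb Q (m+d) (m+1)) * S2.two_eq_zero'

/-- the key three-term recurrence used in the JTP induction (char 2), `1 ≤ b`. -/
lemma gb_step (n b : ℕ) (hb : 1 ≤ b) :
    gb Q (n+2) (b+1) = (1 + Q ^ (n+1)) * gb Q n b + Q ^ (n+1-b) * gb Q n (b-1)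
      + Q ^ (b+1) * gb Q n (b+1) := by
  rcases Nat.lt_or_ge n b with h | h
  · have hsplit : b = n + 1 ∨ n + 2 ≤ b := by omega
    rcases hsplit with rfl | h'
    · have e0 : n + 1 - (n + 1) = 0 := by omega
      have e1 : n + 1 - 1 = n := by omega
      have hL : gb Q (n+2) (n+1+1) = 1 := by
        have h2 : n + 1 + 1 = n + 2 := by omega
        rw [h2, gb_self]
      rw [hL, e0, e1, pow_zero, gb_self, gb_eq_zero_of_lt (Q := Q) (by omega),
        gb_eq_zero_of_lt (Q := Q) (by omega)]
      ring
    · rw [gb_eq_zero_of_lt (Q := Q) (by omega), gb_eq_zero_of_lt (Q := Q) (by omega),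
        gb_eq_zero_of_lt (Q := Q) (by omega), gb_eq_zero_of_lt (Q := Q) (by omega)]
      ring
  · -- 1 ≤ b ≤ n
    obtain ⟨c, rfl⟩ : ∃ c, b = c + 1 := ⟨b - 1, by omega⟩
    obtain ⟨d, rfl⟩ : ∃ d, n = c + 1 + d := ⟨n - (c+1), by omega⟩
    have e1 : c + 1 + d + 1 - (c + 1) = d + 1 := by omega
    have e2 : c + 1 + d - c = d + 1 := by omega
    have e3 : c + 1 + d + 1 - (c + 1) = d + 1 := by omega
    have e4 : c + 1 - 1 = c := by omega
    -- pascal2 at (n+1, c+1): gb (n+2) (c+2) = Q^{c+2} gb (n+1) (c+2) + gb (n+1) (c+1)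
    have p1 := gb_pascal2 (Q := Q) (c+1+d+1) (c+1)
    -- gb_succ at (n, c): gb (n+1) (c+1) = gb n (c+1) + Q^{d+1} gb n c
    have p2 := gb_succ (Q := Q) (c+1+d) c
    rw [e2] at p2
    -- pascal2 at (n, c+1): gb (n+1) (c+2) = Q^{c+2} gb n (c+2) + gb n (c+1)
    have p3 := gb_pascal2 (Q := Q) (c+1+d) (c+1)
    have hr := gb_ratio (Q := Q) (c+1+d) (c+1)
    have e5 : c + 1 + d - (c + 1) = d := by omega
    rw [e5] at hr
    rw [e3, e4]
    rw [p1, p3, p2]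
    linear_combination (Q ^ (c+2)) * hr
      + (Q ^ (c+2) * (gb Q (c+1+d) (c+1) - gb Q (c+1+d) (c+2))) * S2.two_eq_zero'

lemma gb_step0 (n : ℕ) :
    gb Q (n+2) 1 = (1 + Q ^ (n+1)) * gb Q n 0 + Q ^ 1 * gb Q n 1 := by
  have h1 : gb Q (n+2) 1 = gb Q (n+1) 1 + Q ^ (n+1) * gb Q (n+1) 0 := by
    have := gb_succ (Q := Q) (n+1) 0
    rwa [Nat.sub_zero] at this
  have h2 : gb Q (n+1) 1 = gb Q n 1 + Q ^ n * gb Q n 0 := by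
    have := gb_succ (Q := Q) n 0
    rwa [Nat.sub_zero] at this
  have hr := gb_ratio (Q := Q) n 0
  rw [gb_zero_right, mul_one, Nat.sub_zero] at hr
  rw [h1, h2, gb_zero_right, gb_zero_right]
  linear_combination hr + (Q ^ n - Q ^ 1 * gb Q n 1) * S2.two_eq_zero'

/-- truncated product `∏_{i<t} (1 + Q^(i+1))`. -/
def PP (Q : S2) (t : ℕ) : S2 := ∏ i ∈ Finset.range t, (1 + Q ^ (i+1))

@[simp] lemma PP_zero : PP Q 0 = 1 := by simp [PP]

lemma PP_succ (t : ℕ) : PP Q (t+1) = PP Q t * (1 + Q ^ (t+1)) := by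
  rw [PP, Finset.prod_range_succ]; rfl

/-- `gb` times the two factorial-type products equals the big product (char 2). -/
lemma gb_mul_PP : ∀ n m d : ℕ, n = m + d → gb Q n m * PP Q m * PP Q d = PP Q n
  | 0, m, d => by
      intro h
      obtain ⟨rfl, rfl⟩ : m = 0 ∧ d = 0 := by omega
      simp
  | (n+1), m, d => by
      intro h
      rcases Nat.eq_zero_or_pos m with rfl | hm
      · have hd : d = n + 1 := by omega
        subst hd
        simp
      · obtain ⟨c, rfl⟩ : ∃ c, m = c + 1 := ⟨m - 1, by omega⟩
        have hnd : n = c + d := by omega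
        rw [gb_succ]
        have e1 : n - c = d := by omega
        rw [e1]
        rcases Nat.eq_zero_or_pos d with rfl | hd
        · -- m = n+1
          have hc : c = n := by omega
          subst hc
          rw [gb_eq_zero_of_lt (Q := Q) (by omega), pow_zero, one_mul, zero_add,
            gb_self, one_mul, PP_zero, mul_one]
        · obtain ⟨d', rfl⟩ : ∃ d', d = d' + 1 := ⟨d - 1, by omega⟩
          have ih1 := gb_mul_PP n (c+1) d' (by omega)
          have ih2 := gb_mul_PP n c (d'+1) (by omega)
          rw [PP_succ (Q := Q) d'] at ih2
          rw [PP_succ (Q := Q) c] at ih1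
          rw [PP_succ (Q := Q) d', PP_succ (Q := Q) c]
          -- expand and use both IH
          have expand : (gb Q n (c + 1) + Q ^ (d' + 1) * gb Q n c) * (PP Q c * (1 + Q ^ (c + 1)))
                * (PP Q d' * (1 + Q ^ (d' + 1)))
              = (gb Q n (c+1) * (PP Q c * (1 + Q ^ (c+1))) * PP Q d') * (1 + Q ^ (d'+1))
                + Q ^ (d'+1) * (1 + Q ^ (c+1)) * (gb Q n c * PP Q c * (PP Q d' * (1 + Q ^ (d'+1)))) := by
            ring
          rw [expand, ih1, ih2, PP_succ (Q := Q) n]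
          have hpow : Q ^ (d'+1) * Q ^ (c+1) = Q ^ (n+1) := by
            rw [← pow_add]; congr 1; omega
          linear_combination (PP Q n * Q ^ (d'+1)) * S2.two_eq_zero'
            + PP Q n * hpow


/-- exponents `k(2k+1)`, `k ∈ ℤ`, as naturals. -/
def ek (k : ℤ) : ℕ := (k * (2*k+1)).toNat

lemma ek_int_nonneg (k : ℤ) : 0 ≤ k * (2*k+1) := by
  rcases le_or_gt 0 k with h | h
  · positivity
  · nlinarith

lemma ek_shift_down (N : ℕ) (k : ℤ) (hk : k ≤ (N:ℤ)+1) :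
    4 * ((N:ℤ)+1-k).toNat + ek k = ek (k-1) + (4*N+3) := by
  have h1 : k * (2*k+1) = (k-1) * (2*(k-1)+1) + (4*k - 1) := by ring
  have h2 := ek_int_nonneg k
  have h3 := ek_int_nonneg (k-1)
  simp only [ek]
  omega

lemma ek_shift_up (N : ℕ) (k : ℤ) (hk : -(N:ℤ)-1 ≤ k) :
    4 * ((N:ℤ)+1+k).toNat + ek k = ek (k+1) + (4*N+1) := by
  have h1 : (k+1) * (2*(k+1)+1) = k * (2*k+1) + (4*k + 3) := by ring
  have h2 := ek_int_nonneg k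
  have h3 := ek_int_nonneg (k+1)
  simp only [ek]
  omega

/-- the coefficient sequence in the finite Jacobi-type identity. -/
def cgb (Q : S2) (N : ℕ) (k : ℤ) : S2 :=
  if -(N:ℤ) ≤ k ∧ k ≤ (N:ℤ) then gb Q (2*N) (((N:ℤ)+k).toNat) else 0

lemma cgb_eq_zero_of_lt {N : ℕ} {k : ℤ} (h : k < -(N:ℤ)) : cgb Q N k = 0 := by
  rw [cgb, if_neg]; omega

lemma cgb_eq {N : ℕ} {k : ℤ} (h : -(N:ℤ) ≤ k) :
    cgb Q N k = gb Q (2*N) (((N:ℤ)+k).toNat) := by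
  rcases le_or_gt k (N:ℤ) with h2 | h2
  · rw [cgb, if_pos ⟨h, h2⟩]
  · rw [cgb, if_neg (by omega), gb_eq_zero_of_lt (by omega)]

/-- the three-term recurrence for `cgb`. -/
lemma cgb_rec (N : ℕ) (k : ℤ) (h1 : -(N:ℤ)-1 ≤ k) (h2 : k ≤ (N:ℤ)+1) :
    cgb Q (N+1) k = (1 + Q^(2*N+1)) * cgb Q N k
      + Q^(((N:ℤ)+1-k).toNat) * cgb Q N (k-1) + Q^(((N:ℤ)+1+k).toNat) * cgb Q N (k+1) := by
  have hN1 : ((N:ℤ)+1) = ((N+1 : ℕ) : ℤ) := by push_cast; ring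
  rcases eq_or_lt_of_le h1 with rfl | h1'
  · -- k = -N-1
    rw [cgb_eq (N := N+1) (by push_cast; omega)]
    have e0 : (((N+1:ℕ):ℤ) + (-(N:ℤ)-1)).toNat = 0 := by push_cast; omega
    rw [e0, gb_zero_right]
    rw [cgb_eq_zero_of_lt (by omega), cgb_eq_zero_of_lt (by omega),
        cgb_eq (by omega)]
    have e1 : ((N:ℤ) + (-(N:ℤ)-1+1)).toNat = 0 := by omega
    have e2 : ((N:ℤ)+1+(-(N:ℤ)-1)).toNat = 0 := by omega
    rw [e1, e2, gb_zero_right, pow_zero]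
    ring
  · rcases eq_or_lt_of_le (show -(N:ℤ) ≤ k by omega) with rfl | h1''
    · -- k = -N
      rw [cgb_eq (N := N+1) (by push_cast; omega)]
      have e0 : (((N+1:ℕ):ℤ) + (-(N:ℤ))).toNat = 1 := by push_cast; omega
      rw [e0]
      rw [cgb_eq (by omega), cgb_eq_zero_of_lt (by omega), cgb_eq (by omega)]
      have e1 : ((N:ℤ) + (-(N:ℤ))).toNat = 0 := by omega
      have e2 : ((N:ℤ) + (-(N:ℤ)+1)).toNat = 1 := by omega
      have e3 : ((N:ℤ)+1+(-(N:ℤ))).toNat = 1 := by omega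
      rw [e1, e2, e3, gb_zero_right]
      have := gb_step0 (Q := Q) (2*N)
      have e4 : 2*N+2 = 2*(N+1) := by omega
      rw [e4] at this
      rw [this, gb_zero_right]
      ring
    · -- -N+1 ≤ k ≤ N+1
      obtain ⟨b, hb, hb1⟩ : ∃ b : ℕ, (b:ℤ) = (N:ℤ) + k ∧ 1 ≤ b := by
        refine ⟨((N:ℤ)+k).toNat, ?_, ?_⟩ <;> omega
      rw [cgb_eq (N := N+1) (by push_cast; omega), cgb_eq (by omega),
          cgb_eq (by omega), cgb_eq (by omega)]
      have e0 : (((N+1:ℕ):ℤ) + k).toNat = b + 1 := by push_cast; omega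
      have e1 : ((N:ℤ) + k).toNat = b := by omega
      have e2 : ((N:ℤ) + (k-1)).toNat = b - 1 := by omega
      have e3 : ((N:ℤ) + (k+1)).toNat = b + 1 := by omega
      have e4 : ((N:ℤ)+1-k).toNat = 2*N+1-b := by omega
      have e5 : ((N:ℤ)+1+k).toNat = b + 1 := by omega
      rw [e0, e1, e2, e3, e4, e5]
      have e6 : 2*(N+1) = 2*N+2 := by omega
      rw [e6]
      exact gb_step (2*N) b hb1

/-- the finite Jacobi-triple-product-style identity, char 2. -/
theorem jtp : ∀ N : ℕ, (∏ i ∈ Finset.range N, ((1 + (X:S2)^(4*i+1)) * (1 + X^(4*i+3))))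
    = ∑ k ∈ Finset.Icc (-(N:ℤ)) (N:ℤ), cgb ((X:S2)^4) N k * X^(ek k) := by
  intro N
  induction N with
  | zero =>
    simp only [Finset.range_zero, Finset.prod_empty, Nat.cast_zero, neg_zero]
    rw [show Finset.Icc (0:ℤ) 0 = {0} by rfl, Finset.sum_singleton]
    rw [cgb_eq (by omega)]
    norm_num [ek]
  | succ N ih =>
    rw [Finset.prod_range_succ, ih]
    set Q : S2 := (X:S2)^4 with hQ
    set SN : S2 := ∑ k ∈ Finset.Icc (-(N:ℤ)) (N:ℤ), cgb Q N k * X^(ek k) with hSN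
    have hIcc : Finset.Icc (-((N+1:ℕ):ℤ)) ((N+1:ℕ):ℤ) = Finset.Icc (-(N:ℤ)-1) ((N:ℤ)+1) := by
      congr 1 <;> push_cast <;> ring
    rw [hIcc]
    have hper : ∀ k ∈ Finset.Icc (-(N:ℤ)-1) ((N:ℤ)+1),
        cgb Q (N+1) k * X^(ek k)
          = cgb Q N k * X^(ek k) + X^(8*N+4) * (cgb Q N k * X^(ek k))
            + cgb Q N (k-1) * X^(ek (k-1)) * X^(4*N+3)
            + cgb Q N (k+1) * X^(ek (k+1)) * X^(4*N+1) := by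
      intro k hk
      rw [Finset.mem_Icc] at hk
      rw [cgb_rec N k hk.1 hk.2, add_mul, add_mul, add_mul]
      congr 1
      · congr 1
        · rw [hQ, ← pow_mul]
          ring_nf
        · -- middle term
          rw [hQ, ← pow_mul]
          rw [show (X:S2)^(4*(((N:ℤ)+1-k).toNat)) * cgb ((X:S2)^4) N (k-1) * X^(ek k)
              = cgb ((X:S2)^4) N (k-1) * X^(4*(((N:ℤ)+1-k).toNat) + ek k) from by
            rw [pow_add]; ring]
          rw [ek_shift_down N k hk.2, pow_add]
          ring
      · rw [hQ, ← pow_mul]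
        rw [show (X:S2)^(4*(((N:ℤ)+1+k).toNat)) * cgb ((X:S2)^4) N (k+1) * X^(ek k)
            = cgb ((X:S2)^4) N (k+1) * X^(4*(((N:ℤ)+1+k).toNat) + ek k) from by
          rw [pow_add]; ring]
        rw [ek_shift_up N k hk.1, pow_add]
        ring
    rw [Finset.sum_congr rfl hper]
    have split : ∀ f g : ℤ → S2, ∀ s : Finset ℤ,
        (∑ k ∈ s, (f k + g k)) = (∑ k ∈ s, f k) + (∑ k ∈ s, g k) := fun f g s => Finset.sum_add_distrib
    rw [split, split, split]
    have hsub : Finset.Icc (-(N:ℤ)) (N:ℤ) ⊆ Finset.Icc (-(N:ℤ)-1) ((N:ℤ)+1) :=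
      Finset.Icc_subset_Icc (by omega) (by omega)
    have A1 : ∑ k ∈ Finset.Icc (-(N:ℤ)-1) ((N:ℤ)+1), cgb Q N k * X^(ek k) = SN := by
      rw [hSN]
      symm
      apply Finset.sum_subset hsub
      intro x _ hx
      rw [Finset.mem_Icc] at hx
      rcases (by omega : x < -(N:ℤ) ∨ (N:ℤ) < x) with h | h
      · rw [cgb_eq_zero_of_lt h, zero_mul]
      · rw [cgb_eq (by omega), gb_eq_zero_of_lt (by omega), zero_mul]
    have A2 : ∑ k ∈ Finset.Icc (-(N:ℤ)-1) ((N:ℤ)+1), X^(8*N+4) * (cgb Q N k * X^(ek k))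
        = X^(8*N+4) * SN := by
      rw [← Finset.mul_sum, A1]
    have A3 : ∑ k ∈ Finset.Icc (-(N:ℤ)-1) ((N:ℤ)+1), cgb Q N (k-1) * X^(ek (k-1)) * X^(4*N+3)
        = SN * X^(4*N+3) := by
      have hmap : Finset.Icc (-(N:ℤ)-1) ((N:ℤ)+1)
          = (Finset.Icc (-(N:ℤ)-2) (N:ℤ)).map (addRightEmbedding 1) := by
        rw [Finset.map_add_right_Icc]
        congr 1 <;> ring
      rw [hmap, Finset.sum_map]
      simp only [addRightEmbedding_apply, add_sub_cancel_right]
      rw [← Finset.sum_mul]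
      congr 1
      rw [hSN]
      symm
      apply Finset.sum_subset (Finset.Icc_subset_Icc (by omega) (by omega))
      intro x _ hx
      rw [Finset.mem_Icc] at hx
      rcases (by omega : x < -(N:ℤ) ∨ (N:ℤ) < x) with h | h
      · rw [cgb_eq_zero_of_lt h, zero_mul]
      · rw [cgb_eq (by omega), gb_eq_zero_of_lt (by omega), zero_mul]
    have A4 : ∑ k ∈ Finset.Icc (-(N:ℤ)-1) ((N:ℤ)+1), cgb Q N (k+1) * X^(ek (k+1)) * X^(4*N+1)
        = SN * X^(4*N+1) := by
      have hmap : Finset.Icc (-(N:ℤ)-1) ((N:ℤ)+1)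
          = (Finset.Icc (-(N:ℤ)) ((N:ℤ)+2)).map (addRightEmbedding (-1)) := by
        rw [Finset.map_add_right_Icc]
        congr 1 <;> ring
      rw [hmap, Finset.sum_map]
      simp only [addRightEmbedding_apply]
      have hsimp : ∀ x : ℤ, x + (-1) + 1 = x := fun x => by ring
      simp only [hsimp]
      rw [← Finset.sum_mul]
      congr 1
      rw [hSN]
      symm
      apply Finset.sum_subset (Finset.Icc_subset_Icc (by omega) (by omega))
      intro x _ hx
      rw [Finset.mem_Icc] at hx
      rcases (by omega : x < -(N:ℤ) ∨ (N:ℤ) < x) with h | h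
      · rw [cgb_eq_zero_of_lt h, zero_mul]
      · rw [cgb_eq (by omega), gb_eq_zero_of_lt (by omega), zero_mul]
    rw [A1, A2, A3, A4]
    have hx84 : (X:S2)^(8*N+4) = X^(4*N+1) * X^(4*N+3) := by
      rw [← pow_add]; congr 1; omega
    rw [hx84]
    ring


/-! ### truncation tools -/

lemma dvd_sub_mul {d : ℕ} {f g h j : S2} (h1 : (X:S2)^d ∣ f - g) (h2 : (X:S2)^d ∣ h - j) :
    (X:S2)^d ∣ f*h - g*j := by
  have e : f*h - g*j = (f-g)*h + g*(h-j) := by ring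
  rw [e]
  exact dvd_add (h1.mul_right h) (h2.mul_left g)

lemma prod_one_add_sub_one {d : ℕ} : ∀ (r : ℕ) (f : ℕ → ℕ), (∀ i, i < r → d ≤ f i) →
    (X:S2)^d ∣ (∏ i ∈ Finset.range r, (1 + X^(f i))) - 1
  | 0, f, _ => by simp
  | (r+1), f, hf => by
      rw [Finset.prod_range_succ]
      have e : (∏ i ∈ Finset.range r, (1 + (X:S2)^(f i))) * (1 + X^(f r)) - 1
          = ((∏ i ∈ Finset.range r, (1 + (X:S2)^(f i))) - 1) * (1 + X^(f r))
            + X^(f r) := by ring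
      rw [e]
      exact dvd_add ((prod_one_add_sub_one r f (fun i hi => hf i (by omega))).mul_right _)
        (pow_dvd_pow _ (hf r (by omega)))

lemma PP_pow_factor (s t : ℕ) : PP ((X:S2)^s) t = ∏ i ∈ Finset.range t, (1 + X^(s*(i+1))) := by
  apply Finset.prod_congr rfl
  intro i _
  rw [← pow_mul]

lemma PP_stable (s t r : ℕ) : (X:S2)^(s*(t+1)) ∣ PP ((X:S2)^s) (t+r) - PP ((X:S2)^s) t := by
  rw [PP_pow_factor, PP_pow_factor, Finset.prod_range_add]
  have e : (∏ i ∈ Finset.range t, (1 + (X:S2)^(s*(i+1))))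
        * (∏ i ∈ Finset.range r, (1 + X^(s*(t+i+1))))
      - (∏ i ∈ Finset.range t, (1 + (X:S2)^(s*(i+1))))
      = (∏ i ∈ Finset.range t, (1 + (X:S2)^(s*(i+1))))
        * ((∏ i ∈ Finset.range r, (1 + X^(s*(t+i+1)))) - 1) := by ring
  rw [e]
  exact Dvd.dvd.mul_left
    (prod_one_add_sub_one r _ (fun i _ => Nat.mul_le_mul_left s (by omega))) _

lemma PP_congr (s t u t0 : ℕ) (ht : t0 ≤ t) (hu : t0 ≤ u) :
    (X:S2)^(s*(t0+1)) ∣ PP ((X:S2)^s) t - PP ((X:S2)^s) u := by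
  obtain ⟨r1, rfl⟩ : ∃ r, t = t0 + r := ⟨t - t0, by omega⟩
  obtain ⟨r2, rfl⟩ : ∃ r, u = t0 + r := ⟨u - t0, by omega⟩
  have e : PP ((X:S2)^s) (t0+r1) - PP ((X:S2)^s) (t0+r2)
      = (PP ((X:S2)^s) (t0+r1) - PP ((X:S2)^s) t0)
        - (PP ((X:S2)^s) (t0+r2) - PP ((X:S2)^s) t0) := by ring
  rw [e]
  exact dvd_sub (PP_stable s t0 r1) (PP_stable s t0 r2)

lemma isUnit_PP (s t : ℕ) (hs : 1 ≤ s) : IsUnit (PP ((X:S2)^s) t) := by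
  rw [PowerSeries.isUnit_iff_constantCoeff, PP_pow_factor, map_prod]
  have : ∀ i ∈ Finset.range t, constantCoeff (R := ZMod 2) (1 + (X:S2)^(s*(i+1))) = 1 := by
    intro i _
    have hpos : 0 < s*(i+1) := Nat.mul_pos hs (Nat.succ_pos i)
    rw [map_add, map_one, ← coeff_zero_eq_constantCoeff_apply, PowerSeries.coeff_X_pow,
      if_neg (by omega), add_zero]
  rw [Finset.prod_congr rfl this, Finset.prod_const_one]
  exact isUnit_one

/-- key approximation: `gb (X^4) (2N) b * PP (X^4) L ≡ 1` to high order. -/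
lemma gb_mul_PP_near_one (N b L t0 : ℕ) (hb : b ≤ 2*N) (h1 : t0 ≤ b) (h2 : t0 ≤ 2*N - b)
    (h3 : t0 ≤ L) :
    (X:S2)^(4*(t0+1)) ∣ gb ((X:S2)^4) (2*N) b * PP ((X:S2)^4) L - 1 := by
  set Q : S2 := (X:S2)^4 with hQ
  have hG : gb Q (2*N) b * PP Q b * PP Q (2*N - b) = PP Q (2*N) :=
    gb_mul_PP (2*N) b (2*N - b) (by omega)
  have hu : IsUnit (PP Q b * PP Q (2*N-b)) :=
    (isUnit_PP 4 b (by omega)).mul (isUnit_PP 4 (2*N-b) (by omega))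
  obtain ⟨u, hu'⟩ := hu
  have hw : (gb Q (2*N) b * PP Q L - 1) * (PP Q b * PP Q (2*N-b))
      = PP Q L * PP Q (2*N) - PP Q b * PP Q (2*N-b) := by
    calc (gb Q (2*N) b * PP Q L - 1) * (PP Q b * PP Q (2*N-b))
        = PP Q L * (gb Q (2*N) b * PP Q b * PP Q (2*N-b)) - PP Q b * PP Q (2*N-b) := by ring
      _ = _ := by rw [hG]
  have hdvd : (X:S2)^(4*(t0+1)) ∣ PP Q L * PP Q (2*N) - PP Q b * PP Q (2*N-b) := by
    apply dvd_sub_mul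
    · exact PP_congr 4 L b t0 h3 h1
    · exact PP_congr 4 (2*N) (2*N-b) t0 (by omega) h2
  rw [← hw] at hdvd
  have : gb Q (2*N) b * PP Q L - 1
      = ((gb Q (2*N) b * PP Q L - 1) * (PP Q b * PP Q (2*N-b))) * ↑u⁻¹ := by
    rw [mul_assoc, ← hu', ← Units.val_mul, mul_inv_cancel, Units.val_one, mul_one]
  rw [this]
  exact hdvd.mul_right _

lemma ek_mod3 (k : ℤ) : ek k % 3 ≠ 2 := by
  have h : k % 3 = 0 ∨ k % 3 = 1 ∨ k % 3 = 2 := by omega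
  rcases h with h | h | h
  · obtain ⟨t, rfl⟩ : ∃ t, k = 3*t := ⟨k/3, by omega⟩
    have hu : (3*t) * (2*(3*t)+1) = 3*(t*(6*t+1)) := by ring
    have hu0 : 0 ≤ t*(6*t+1) := by
      rcases le_or_gt 0 t with h' | h'
      · exact mul_nonneg h' (by omega)
      · have h2 : 0 ≤ (-(t))*(-((6*t+1))) := mul_nonneg (by omega) (by omega)
        have e : (-(t))*(-((6*t+1))) = t*(6*t+1) := by ring
        rw [e] at h2
        exact h2
    simp only [ek, hu]
    generalize t*(6*t+1) = u at hu0 ⊢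
    omega
  · obtain ⟨t, rfl⟩ : ∃ t, k = 3*t+1 := ⟨k/3, by omega⟩
    have hu : (3*t+1) * (2*(3*t+1)+1) = 3*((3*t+1)*(2*t+1)) := by ring
    have hu0 : 0 ≤ (3*t+1)*(2*t+1) := by
      rcases le_or_gt 0 t with h' | h'
      · exact mul_nonneg (by omega) (by omega)
      · have h2 : 0 ≤ (-((3*t+1)))*(-((2*t+1))) := mul_nonneg (by omega) (by omega)
        have e : (-((3*t+1)))*(-((2*t+1))) = (3*t+1)*(2*t+1) := by ring
        rw [e] at h2
        exact h2
    simp only [ek, hu]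
    generalize (3*t+1)*(2*t+1) = u at hu0 ⊢
    omega
  · obtain ⟨t, rfl⟩ : ∃ t, k = 3*t+2 := ⟨k/3, by omega⟩
    have hu : (3*t+2) * (2*(3*t+2)+1) = 3*(3*((2*t+1)*(t+1)))+1 := by ring
    have hu0 : 0 ≤ (2*t+1)*(t+1) := by
      rcases le_or_gt 0 t with h' | h'
      · exact mul_nonneg (by omega) (by omega)
      · have h2 : 0 ≤ (-((2*t+1)))*(-((t+1))) := mul_nonneg (by omega) (by omega)
        have e : (-((2*t+1)))*(-((t+1))) = (2*t+1)*(t+1) := by ring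
        rw [e] at h2
        exact h2
    simp only [ek, hu]
    generalize (2*t+1)*(t+1) = u at hu0 ⊢
    omega

/-- the main coefficient vanishing : `M ≡ 2 (mod 3)`. -/
theorem coeff_main_zero (M : ℕ) (hM : M % 3 = 2) :
    (PowerSeries.coeff (R := ZMod 2) M)
      ((∏ i ∈ Finset.range (2*M+1), ((1 + (X:S2)^(4*i+1)) * (1 + X^(4*i+3))))
        * PP ((X:S2)^4) (2*M+1)) = 0 := by
  set N : ℕ := 2*M+1 with hN
  rw [jtp N, Finset.sum_mul, map_sum]
  apply Finset.sum_eq_zero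
  intro k hk
  rw [Finset.mem_Icc] at hk
  have e : cgb ((X:S2)^4) N k * X^(ek k) * PP ((X:S2)^4) N
      = (cgb ((X:S2)^4) N k * PP ((X:S2)^4) N) * X^(ek k) := by ring
  rw [e, PowerSeries.coeff_mul_X_pow']
  split_ifs with hle
  · -- ek k ≤ M
    have hekk : (k*(2*k+1)).toNat = ek k := rfl
    have hkM : -(M:ℤ) ≤ k ∧ k ≤ (M:ℤ) := by
      have h0 := ek_int_nonneg k
      have h1 : k*(2*k+1) ≤ (M:ℤ) := by
        have : ((ek k : ℕ) : ℤ) ≤ (M:ℤ) := by exact_mod_cast hle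
        simp only [ek] at this
        omega
      constructor <;> nlinarith
    rw [cgb_eq (by omega)]
    set b : ℕ := ((N:ℤ)+k).toNat with hb
    have hbb : b ≤ 2*N := by omega
    have ht1 : M+1 ≤ b := by omega
    have ht2 : M+1 ≤ 2*N - b := by omega
    have ht3 : M+1 ≤ N := by omega
    have hnear := gb_mul_PP_near_one N b N (M+1) hbb ht1 ht2 ht3
    have hcoeff0 : (PowerSeries.coeff (R := ZMod 2) (M - ek k))
        (gb ((X:S2)^4) (2*N) b * PP ((X:S2)^4) N - 1) = 0 := by
      rw [PowerSeries.X_pow_dvd_iff] at hnear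
      exact hnear _ (by omega)
    have hsplit : gb ((X:S2)^4) (2*N) b * PP ((X:S2)^4) N
        = (gb ((X:S2)^4) (2*N) b * PP ((X:S2)^4) N - 1) + 1 := by ring
    rw [hsplit, map_add, hcoeff0, zero_add, PowerSeries.coeff_one, if_neg]
    -- M - ek k ≠ 0, i.e. ek k ≠ M since ek k ≤ M
    intro h0
    have : ek k = M := by omega
    exact ek_mod3 k (by omega)
  · rfl


/-! ### relating `PP X t ^ 3` to the JTP product -/

lemma S2.neg_eq (y : S2) : -y = y := neg_eq_of_add_eq_zero_left (S2.add_self y)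

lemma S2.sub_eq_add (x y : S2) : x - y = x + y := by rw [sub_eq_add_neg, S2.neg_eq]

lemma PP_sq (Q : S2) : ∀ t : ℕ, (PP Q t)^2 = PP (Q^2) t
  | 0 => by simp
  | (t+1) => by
      rw [PP_succ, PP_succ, mul_pow, PP_sq Q t, S2.sq_one_add, ← pow_mul, ← pow_mul,
        Nat.mul_comm]

/-- odd-part product -/
def Odd2 (s : ℕ) : S2 := ∏ i ∈ Finset.range s, (1 + (X:S2)^(2*i+1))

lemma Odd2_succ (s : ℕ) : Odd2 (s+1) = Odd2 s * (1 + (X:S2)^(2*s+1)) := by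
  rw [Odd2, Finset.prod_range_succ]; rfl

lemma PP_X_split : ∀ s : ℕ, PP (X:S2) (2*s) = Odd2 s * PP ((X:S2)^2) s
  | 0 => by simp [Odd2]
  | (s+1) => by
      have h1 : 2*(s+1) = (2*s) + 1 + 1 := by omega
      have h2 : ((X:S2)^2)^(s+1) = X^(2*s+1+1) := by rw [← pow_mul]; congr 1
      rw [h1, PP_succ, PP_succ, PP_X_split s, Odd2_succ, PP_succ, h2]
      ring
  
lemma Odd2_split : ∀ N : ℕ, Odd2 (2*N)
    = ∏ i ∈ Finset.range N, ((1 + (X:S2)^(4*i+1)) * (1 + X^(4*i+3)))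
  | 0 => by simp [Odd2]
  | (N+1) => by
      have h1 : 2*(N+1) = (2*N) + 1 + 1 := by omega
      rw [Finset.prod_range_succ, ← Odd2_split N, Odd2, Odd2, h1,
        Finset.prod_range_succ, Finset.prod_range_succ]
      rw [show 2*(2*N)+1 = 4*N+1 from by omega, show 2*(2*N+1)+1 = 4*N+3 from by omega]
      ring

/-- the main truncated congruence:
`PP X (M+1) ^ 3 ≡ (JTP product) * PP (X^4) (2M+1)  mod X^(M+1)`. -/
lemma PP_cube_congr (M : ℕ) :
    (X:S2)^(M+1) ∣ (PP (X:S2) (M+1))^3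
      - (∏ i ∈ Finset.range (2*M+1), ((1 + (X:S2)^(4*i+1)) * (1 + X^(4*i+3))))
        * PP ((X:S2)^4) (2*M+1) := by
  set N : ℕ := 2*M+1 with hN
  set s : ℕ := 2*N with hs
  have hX1 : (X:S2) = X^1 := (pow_one _).symm
  -- step 1 : change truncation length M+1 → 2*s in the cube
  have step1 : (X:S2)^(M+1) ∣ (PP (X:S2) (M+1))^3 - (PP (X:S2) (2*s))^3 := by
    have hbase : (X:S2)^(M+1) ∣ PP (X:S2) (M+1) - PP (X:S2) (2*s) := by
      have := PP_congr 1 (M+1) (2*s) M (by omega) (by omega)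
      rwa [← hX1, show 1*(M+1) = M+1 from by omega] at this
    have h3 : ∀ f g : S2, (X:S2)^(M+1) ∣ f - g → (X:S2)^(M+1) ∣ f^3 - g^3 := by
      intro f g h
      have e1 : f^3 = f * (f * f) := by ring
      have e2 : g^3 = g * (g * g) := by ring
      rw [e1, e2]
      exact dvd_sub_mul h (dvd_sub_mul h h)
    exact h3 _ _ hbase
  -- step 2 : split the cube
  have step2 : (PP (X:S2) (2*s))^3 = Odd2 s * PP ((X:S2)^2) s * PP ((X:S2)^2) (2*s) := by
    calc (PP (X:S2) (2*s))^3 = PP (X:S2) (2*s) * (PP (X:S2) (2*s))^2 := by ring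
      _ = Odd2 s * PP ((X:S2)^2) s * PP ((X:S2)^2) (2*s) := by
          rw [PP_sq, PP_X_split s]
  -- step 3 : PP (X^2) (2*s) ≡ PP (X^2) s, and merge squares
  have step3 : (X:S2)^(M+1) ∣ Odd2 s * PP ((X:S2)^2) s * PP ((X:S2)^2) (2*s)
      - Odd2 s * PP ((X:S2)^4) s := by
    have hc : (X:S2)^(2*(s+1)) ∣ PP ((X:S2)^2) (2*s) - PP ((X:S2)^2) s :=
      PP_congr 2 (2*s) s s (by omega) (by omega)
    have e : Odd2 s * PP ((X:S2)^2) s * PP ((X:S2)^2) (2*s) - Odd2 s * PP ((X:S2)^4) s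
        = (Odd2 s * PP ((X:S2)^2) s) * (PP ((X:S2)^2) (2*s) - PP ((X:S2)^2) s) := by
      have hm : PP ((X:S2)^2) s * PP ((X:S2)^2) s = PP ((X:S2)^4) s := by
        have := PP_sq ((X:S2)^2) s
        rw [← pow_mul] at this
        rw [show PP ((X:S2)^2) s * PP ((X:S2)^2) s = (PP ((X:S2)^2) s)^2 from by ring, this]
      calc Odd2 s * PP ((X:S2)^2) s * PP ((X:S2)^2) (2*s) - Odd2 s * PP ((X:S2)^4) s
          = Odd2 s * PP ((X:S2)^2) s * PP ((X:S2)^2) (2*s)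
            - Odd2 s * (PP ((X:S2)^2) s * PP ((X:S2)^2) s) := by rw [hm]
        _ = _ := by ring
    rw [e]
    exact dvd_trans (pow_dvd_pow _ (by omega)) (hc.mul_left _)
  -- step 4 : change PP (X^4) s → PP (X^4) N
  have step4 : (X:S2)^(M+1) ∣ Odd2 s * PP ((X:S2)^4) s - Odd2 s * PP ((X:S2)^4) N := by
    have hc : (X:S2)^(4*(N+1)) ∣ PP ((X:S2)^4) s - PP ((X:S2)^4) N :=
      PP_congr 4 s N N (by omega) (by omega)
    have e : Odd2 s * PP ((X:S2)^4) s - Odd2 s * PP ((X:S2)^4) N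
        = Odd2 s * (PP ((X:S2)^4) s - PP ((X:S2)^4) N) := by ring
    rw [e]
    exact dvd_trans (pow_dvd_pow _ (by omega)) (hc.mul_left _)
  -- assemble
  have hodd : Odd2 s = ∏ i ∈ Finset.range N, ((1 + (X:S2)^(4*i+1)) * (1 + X^(4*i+3))) := by
    rw [hs]; exact Odd2_split N
  have total : (X:S2)^(M+1) ∣ (PP (X:S2) (M+1))^3 - Odd2 s * PP ((X:S2)^4) N := by
    have e : (PP (X:S2) (M+1))^3 - Odd2 s * PP ((X:S2)^4) N
        = ((PP (X:S2) (M+1))^3 - (PP (X:S2) (2*s))^3)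
          + (Odd2 s * PP ((X:S2)^2) s * PP ((X:S2)^2) (2*s) - Odd2 s * PP ((X:S2)^4) s)
          + (Odd2 s * PP ((X:S2)^4) s - Odd2 s * PP ((X:S2)^4) N)
          + ((PP (X:S2) (2*s))^3 - Odd2 s * PP ((X:S2)^2) s * PP ((X:S2)^2) (2*s)) := by
      ring
    have hz : (PP (X:S2) (2*s))^3 - Odd2 s * PP ((X:S2)^2) s * PP ((X:S2)^2) (2*s) = 0 := by
      rw [step2]; ring
    rw [e, hz, add_zero]
    exact dvd_add (dvd_add step1 step3) step4
  rwa [hodd] at total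

/-- coefficient `M ≡ 2 (mod 3)` of `PP X (M+1) ^ 3` vanishes. -/
theorem coeff_PP_cube (M : ℕ) (hM : M % 3 = 2) :
    (PowerSeries.coeff (R := ZMod 2) M) ((PP (X:S2) (M+1))^3) = 0 := by
  have h1 := PP_cube_congr M
  rw [PowerSeries.X_pow_dvd_iff] at h1
  have h2 := h1 M (by omega)
  rw [map_sub, sub_eq_zero] at h2
  rw [h2, coeff_main_zero M hM]


/-! ### reduction of `a 5 M` mod 2 -/

/-- the mod-2 reduction map on power series. -/
def psi : PowerSeries ℤ →+* S2 := PowerSeries.map (Int.castRingHom (ZMod 2))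

lemma psi_one_sub_X_pow (j : ℕ) :
    psi ((1 : PowerSeries ℤ) - (PowerSeries.X : PowerSeries ℤ)^j) = 1 + (X:S2)^j := by
  rw [psi, map_sub, map_one, map_pow, PowerSeries.map_X, S2.sub_eq_add]

lemma isUnit_one_sub_X_pow (i : ℕ) :
    IsUnit ((1 : PowerSeries ℤ) - (PowerSeries.X : PowerSeries ℤ)^(i+1)) := by
  rw [PowerSeries.isUnit_iff_constantCoeff, map_sub, map_one, map_pow,
    PowerSeries.constantCoeff_X, zero_pow (by omega), sub_zero]
  exact isUnit_one

lemma psi_inverse_prop (i : ℕ) :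
    (1 + (X:S2)^(i+1))
      * psi (Ring.inverse ((1 : PowerSeries ℤ) - (PowerSeries.X : PowerSeries ℤ)^(i+1))) = 1 := by
  have h := Ring.mul_inverse_cancel _ (isUnit_one_sub_X_pow i)
  have h2 := congrArg psi h
  rw [map_mul, map_one, psi_one_sub_X_pow] at h2
  exact h2

lemma bridge (M : ℕ) : ((a 5 M : ℤ) : ZMod 2)
    = PowerSeries.coeff (R := ZMod 2) M ((PP (X:S2) (M+1))^3) := by
  have hcast : ((a 5 M : ℤ) : ZMod 2)
      = PowerSeries.coeff (R := ZMod 2) M (psi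
        ((∏ i ∈ Finset.range (M + 1),
            ((1 : PowerSeries ℤ) - (PowerSeries.X : PowerSeries ℤ) ^ (2 * (i + 1))) ^ (5 - 1)) *
          ∏ i ∈ Finset.range (M + 1),
            (Ring.inverse ((1 : PowerSeries ℤ)
              - (PowerSeries.X : PowerSeries ℤ) ^ (i + 1))) ^ 5)) := by
    rw [psi, PowerSeries.coeff_map, a]
    rfl
  rw [hcast, map_mul, map_prod, map_prod]
  congr 1
  have hfac : ∀ i ∈ Finset.range (M+1),
      psi (((1 : PowerSeries ℤ) - (PowerSeries.X : PowerSeries ℤ) ^ (2 * (i + 1))) ^ (5-1))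
        * psi ((Ring.inverse ((1 : PowerSeries ℤ)
            - (PowerSeries.X : PowerSeries ℤ) ^ (i + 1))) ^ 5)
      = (1 + (X:S2)^(i+1))^3 := by
    intro i _
    rw [map_pow, map_pow, psi_one_sub_X_pow]
    set w : S2 := psi (Ring.inverse ((1 : PowerSeries ℤ)
        - (PowerSeries.X : PowerSeries ℤ) ^ (i + 1))) with hwdef
    have hw := psi_inverse_prop i
    rw [← hwdef] at hw
    have hsq : (1+(X:S2)^(i+1))^2 = 1 + X^(2*(i+1)) := by
      rw [S2.sq_one_add]
      congr 1
      rw [← pow_mul]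
      congr 1
      omega
    calc (1 + (X:S2)^(2*(i+1)))^(5-1) * w^5
        = ((1+(X:S2)^(i+1))^2)^(5-1) * w^5 := by rw [hsq]
      _ = (1+(X:S2)^(i+1))^3 * ((1+(X:S2)^(i+1)) * w)^5 := by ring
      _ = (1+(X:S2)^(i+1))^3 := by rw [hw, one_pow, mul_one]
  rw [← Finset.prod_mul_distrib, Finset.prod_congr rfl hfac, PP, ← Finset.prod_pow]

theorem two_dvd_a_five (M : ℕ) (hM : M % 3 = 2) : (2:ℤ) ∣ a 5 M := by
  have h := coeff_PP_cube M hM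
  have hb := bridge M
  rw [h] at hb
  have := (ZMod.intCast_zmod_eq_zero_iff_dvd (a 5 M) 2).mp hb
  exact_mod_cast this


end AuxJTP

theorem a_five_six_n_plus_five (n : ℕ) :
    (2 : ℤ) ∣ a 5 (6 * n + 5) := by
  exact two_dvd_a_five (6 * n + 5) (by omega)
end
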